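/- arXiv:1603.03838 — 2 statements merged into one kernel-verified Lean document; each statement's English description precedes it below -/
import Mathlib

section
/- Let 0 < r < R and let r', R' satisfy r²/R < r' < R' < R²/r. Then there exists a constant C > 0 such that for every k ∈ ℤ: ∫_{A(r',R')} |z|^{2k} dA(z) ≤ C · (∫_{A(r,R)} |z|^{2k} dA(z))² · ∫_{A(r,R)} |z|^{−2k} dA(z). -/
open MeasureTheory Complex Filter Topology

noncomputable section

/-- The open annulus `{z : r < |z| < R}` in `ℂ`. -/
def Annulus (r R : ℝ) : Set ℂ := {z : ℂ | r < ‖z‖ ∧ ‖z‖ < R}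

/-- A product of annuli in `ℂⁿ`. -/
def ProdAnnuli {n : ℕ} (r R : Fin n → ℝ) : Set (Fin n → ℂ) :=
  {z | ∀ k, z k ∈ Annulus (r k) (R k)}

/-- Membership in the Bergman space `A²(Ω)`: holomorphic and square integrable on `Ω`. -/
def MemA2 {E : Type*} [NormedAddCommGroup E] [NormedSpace ℂ E] [MeasureSpace E]
    (f : E → ℂ) (Ω : Set E) : Prop :=
  DifferentiableOn ℂ f Ω ∧ MemLp f 2 (volume.restrict Ω)

/-- `g` is the Bergman projection of `u ∈ L²(Ω)`: `g ∈ A²(Ω)` and `u - g ⟂ A²(Ω)`. -/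
def IsBergmanProj {E : Type*} [NormedAddCommGroup E] [NormedSpace ℂ E] [MeasureSpace E]
    (Ω : Set E) (u g : E → ℂ) : Prop :=
  MemA2 g Ω ∧
    ∀ h : E → ℂ, MemA2 h Ω → ∫ z in Ω, (u z - g z) * (starRingEnd ℂ) (h z) = 0

/-- `Ω` is invariant under independent rotations of the coordinates. -/
def IsReinhardt {n : ℕ} (Ω : Set (Fin n → ℂ)) : Prop :=
  ∀ z ∈ Ω, ∀ θ : Fin n → ℝ, (fun k => Complex.exp ((θ k : ℂ) * Complex.I) * z k) ∈ Ω

/- ### Auxiliary lemmas -/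

lemma isOpen_annulus (a b : ℝ) : IsOpen (Annulus a b) :=
  isOpen_Ioo.preimage continuous_norm

lemma meas_annulus (a b : ℝ) : MeasurableSet (Annulus a b) := (isOpen_annulus a b).measurableSet

lemma vol_annulus_ne_top (a b : ℝ) : volume (Annulus a b) ≠ ⊤ := by
  refine ne_top_of_le_ne_top (measure_ball_lt_top :
    volume (Metric.ball (0:ℂ) b) < ⊤).ne (measure_mono fun z hz => ?_)
  simpa using hz.2

lemma vol_annulus_pos (a b : ℝ) (h0 : 0 ≤ a) (hab : a < b) :
    0 < (volume (Annulus a b)).toReal := by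
  refine ENNReal.toReal_pos ?_ (vol_annulus_ne_top a b)
  refine ((isOpen_annulus a b).measure_pos volume ?_).ne'
  refine ⟨(((a+b)/2 : ℝ) : ℂ), ?_, ?_⟩ <;>
    rw [Complex.norm_real, Real.norm_of_nonneg (by linarith : (0:ℝ) ≤ (a+b)/2)] <;> linarith

lemma zpow_mono_base {x y : ℝ} (hx : 0 < x) (hxy : x ≤ y) {n : ℤ} (hn : 0 ≤ n) :
    x ^ n ≤ y ^ n := by
  lift n to ℕ using hn
  simpa using pow_le_pow_left₀ hx.le hxy n

lemma zpow_anti_base {x y : ℝ} (hx : 0 < x) (hxy : x ≤ y) {n : ℤ} (hn : n ≤ 0) :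
    y ^ n ≤ x ^ n := by
  obtain ⟨m, rfl⟩ : ∃ m : ℤ, n = -m := ⟨-n, by ring⟩
  rw [zpow_neg, zpow_neg]
  have hm : 0 ≤ m := by omega
  exact inv_anti₀ (zpow_pos hx m) (zpow_mono_base hx hxy hm)

lemma measurable_zpow_real (n : ℤ) : Measurable (fun x : ℝ => x ^ n) := by
  rcases n with m | m
  · simpa using (measurable_id.pow_const m)
  · simpa [zpow_negSucc] using
      ((measurable_id.pow_const (m+1)) : Measurable fun x : ℝ => x ^ (m+1))

lemma integrableOn_abs_zpow (a b : ℝ) (ha : 0 < a) (n : ℤ) :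
    IntegrableOn (fun z : ℂ => ‖z‖ ^ n) (Annulus a b) := by
  refine Measure.integrableOn_of_bounded (vol_annulus_ne_top a b) ?_
    (M := max (a ^ n) (b ^ n)) ?_
  · exact ((measurable_zpow_real n).comp continuous_norm.measurable).aestronglyMeasurable
  · rw [ae_restrict_iff' (meas_annulus a b)]
    filter_upwards with z hz
    rw [Real.norm_eq_abs, _root_.abs_of_nonneg (zpow_nonneg (norm_nonneg z) n)]
    rcases le_or_gt 0 n with hn | hn
    · exact le_max_of_le_right (zpow_mono_base (ha.trans hz.1) hz.2.le hn)
    · exact le_max_of_le_left (zpow_anti_base ha hz.1.le hn.le)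

lemma setIntegral_abs_zpow_nonneg (a b : ℝ) (n : ℤ) :
    0 ≤ ∫ z in Annulus a b, ‖z‖ ^ n :=
  setIntegral_nonneg (meas_annulus a b) fun z _ => zpow_nonneg (norm_nonneg z) n

lemma ub_aux (a b M : ℝ) (n : ℤ) (hM : ∀ z ∈ Annulus a b, ‖z‖ ^ n ≤ M) :
    ∫ z in Annulus a b, ‖z‖ ^ n ≤ M * (volume (Annulus a b)).toReal := by
  refine le_trans (le_abs_self _) ?_
  rw [← Real.norm_eq_abs]
  refine norm_setIntegral_le_of_norm_le_const (vol_annulus_ne_top a b).lt_top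
    (fun z hz => ?_)
  · rw [Real.norm_eq_abs, _root_.abs_of_nonneg (zpow_nonneg (norm_nonneg z) n)]
    exact hM z hz

lemma lb_aux (a b a' b' c : ℝ) (ha : 0 < a) (ha' : a ≤ a') (hb' : b' ≤ b) (n : ℤ)
    (hc : ∀ z ∈ Annulus a' b', c ≤ ‖z‖ ^ n) :
    c * (volume (Annulus a' b')).toReal ≤ ∫ z in Annulus a b, ‖z‖ ^ n := by
  have hsub : Annulus a' b' ⊆ Annulus a b := fun z hz =>
    ⟨lt_of_le_of_lt ha' hz.1, lt_of_lt_of_le hz.2 hb'⟩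
  calc c * (volume (Annulus a' b')).toReal
      ≤ ∫ z in Annulus a' b', ‖z‖ ^ n :=
        setIntegral_ge_of_const_le_real (meas_annulus a' b') (vol_annulus_ne_top a' b') hc
          ((integrableOn_abs_zpow a b ha n).mono_set hsub)
    _ ≤ ∫ z in Annulus a b, ‖z‖ ^ n :=
        setIntegral_mono_set (integrableOn_abs_zpow a b ha n)
          ((ae_restrict_iff' (meas_annulus a b)).2 (ae_of_all _ fun z _ =>
            zpow_nonneg (norm_nonneg z) n)) (HasSubset.Subset.eventuallyLE hsub)

/-- For `0 < r < R` and `r²/R < r' < R' < R²/r`, there is a constant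
`C > 0` such that for every `k ∈ ℤ`,
`∫_{A(r',R')} |z|^{2k} dA ≤ C (∫_{A(r,R)} |z|^{2k} dA)² ∫_{A(r,R)} |z|^{-2k} dA`. -/
theorem annulus_norm_comparison (r R r' R' : ℝ) (hr0 : 0 < r) (hrR : r < R)
    (h1 : r ^ 2 / R < r') (h2 : r' < R') (h3 : R' < R ^ 2 / r) :
    ∃ C : ℝ, 0 < C ∧ ∀ k : ℤ,
      (∫ z in Annulus r' R', ‖z‖ ^ (2 * k)) ≤
        C * (∫ z in Annulus r R, ‖z‖ ^ (2 * k)) ^ 2 *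
          ∫ z in Annulus r R, ‖z‖ ^ (-(2 * k)) := by
  have hR0 : 0 < R := hr0.trans hrR
  have hr'0 : 0 < r' := lt_trans (div_pos (pow_pos hr0 2) hR0) h1
  have hR'0 : 0 < R' := hr'0.trans h2
  -- constants for the case `0 ≤ k`
  set q : ℝ := R' * r / R ^ 2 with hqdef
  have hq0 : 0 < q := by positivity
  have hq1 : q < 1 := by
    rw [hqdef, div_lt_one (pow_pos hR0 2)]
    exact (lt_div_iff₀ hr0).mp h3
  set u : ℝ := q ^ ((1:ℝ)/3) with hudef
  have hu0 : 0 < u := Real.rpow_pos_of_pos hq0 _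
  have hu1 : u < 1 := Real.rpow_lt_one hq0.le hq1 (by norm_num)
  have hu3 : u ^ (3:ℕ) = q := by
    rw [hudef, ← Real.rpow_natCast (q ^ ((1:ℝ)/3)) 3, ← Real.rpow_mul hq0.le]
    norm_num
  set c : ℝ := R * u with hcdef
  set c' : ℝ := r / u with hc'def
  have hc0 : 0 < c := by positivity
  have hcR : c < R := by
    rw [hcdef]; exact mul_lt_of_lt_one_right hR0 hu1
  have hc'0 : 0 < c' := by positivity
  have hc'r : r < c' := by
    rw [hc'def, lt_div_iff₀ hu0]
    exact mul_lt_of_lt_one_right hr0 hu1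
  have hcc : c * c = R' * c' := by
    rw [hcdef, hc'def, ← mul_div_assoc, eq_div_iff hu0.ne']
    have h3' : R ^ 2 * u ^ (3:ℕ) = R' * r := by
      rw [hu3, hqdef]; field_simp
    linear_combination h3'
  -- constants for the case `k ≤ 0`
  set p : ℝ := r' * R / r ^ 2 with hpdef
  have hp0 : 0 < p := by positivity
  have hp1 : 1 < p := by
    rw [hpdef, lt_div_iff₀ (pow_pos hr0 2), one_mul]
    exact (div_lt_iff₀ hR0).mp h1
  set v : ℝ := p ^ ((1:ℝ)/3) with hvdef
  have hv0 : 0 < v := Real.rpow_pos_of_pos hp0 _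
  have hv1 : 1 < v := Real.one_lt_rpow_iff_of_pos hp0 |>.mpr (Or.inl ⟨hp1, by norm_num⟩)
  have hv3 : v ^ (3:ℕ) = p := by
    rw [hvdef, ← Real.rpow_natCast (p ^ ((1:ℝ)/3)) 3, ← Real.rpow_mul hp0.le]
    norm_num
  set d : ℝ := r * v with hddef
  set d' : ℝ := R / v with hd'def
  have hd0 : 0 < d := by positivity
  have hrd : r < d := by
    rw [hddef]; exact lt_mul_of_one_lt_right hr0 hv1
  have hd'0 : 0 < d' := by positivity
  have hd'R : d' < R := by
    rw [hd'def]; exact div_lt_self hR0 hv1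
  have hdd : d * d = r' * d' := by
    rw [hddef, hd'def, ← mul_div_assoc, eq_div_iff hv0.ne']
    have h1' : r ^ 2 * v ^ (3:ℕ) = r' * R := by
      rw [hv3, hpdef]; field_simp
    linear_combination h1'
  -- volumes
  set V' : ℝ := (volume (Annulus r' R')).toReal with hV'def
  set V1 : ℝ := (volume (Annulus (max c r) R)).toReal with hV1def
  set V2 : ℝ := (volume (Annulus r (min c' R))).toReal with hV2def
  set V3 : ℝ := (volume (Annulus r (min d R))).toReal with hV3def
  set V4 : ℝ := (volume (Annulus (max d' r) R)).toReal with hV4def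
  have hV1 : 0 < V1 := vol_annulus_pos _ _ (le_max_of_le_right hr0.le) (max_lt hcR hrR)
  have hV2 : 0 < V2 := vol_annulus_pos _ _ hr0.le (lt_min hc'r hrR)
  have hV3 : 0 < V3 := vol_annulus_pos _ _ hr0.le (lt_min hrd hrR)
  have hV4 : 0 < V4 := vol_annulus_pos _ _ (le_max_of_le_right hr0.le) (max_lt hd'R hrR)
  have hV'0 : 0 ≤ V' := ENNReal.toReal_nonneg
  refine ⟨max (V' / (V1 ^ 2 * V2)) (V' / (V3 ^ 2 * V4)), ?_, ?_⟩
  · exact lt_max_of_lt_right (div_pos (vol_annulus_pos _ _ hr'0.le h2) (by positivity))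
  intro k
  set C : ℝ := max (V' / (V1 ^ 2 * V2)) (V' / (V3 ^ 2 * V4)) with hCdef
  have hC0 : 0 < C :=
    lt_max_of_lt_right (div_pos (vol_annulus_pos _ _ hr'0.le h2) (by positivity))
  rcases le_or_gt 0 k with hk | hk
  · -- `0 ≤ k`
    have hn : (0:ℤ) ≤ 2 * k := by omega
    have hupper : (∫ z in Annulus r' R', ‖z‖ ^ (2*k)) ≤ R' ^ (2*k) * V' :=
      ub_aux r' R' _ _ fun z hz => zpow_mono_base (hr'0.trans hz.1) hz.2.le hn
    have hI : c ^ (2*k) * V1 ≤ ∫ z in Annulus r R, ‖z‖ ^ (2*k) :=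
      lb_aux r R (max c r) R _ hr0 (le_max_right c r) le_rfl _ fun z hz =>
        zpow_mono_base hc0 ((le_max_left c r).trans hz.1.le) hn
    have hJ : c' ^ (-(2*k)) * V2 ≤ ∫ z in Annulus r R, ‖z‖ ^ (-(2*k)) :=
      lb_aux r R r (min c' R) _ hr0 le_rfl (min_le_right c' R) _ fun z hz =>
        zpow_anti_base (hr0.trans hz.1) (hz.2.le.trans (min_le_left c' R)) (by omega)
    have hkey : c ^ (2*k) * c ^ (2*k) * c' ^ (-(2*k)) = R' ^ (2*k) := by
      rw [← mul_zpow, hcc, mul_zpow, mul_assoc, zpow_neg,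
        mul_inv_cancel₀ (zpow_ne_zero _ hc'0.ne'), mul_one]
    have hCV : V' ≤ C * (V1 ^ 2 * V2) :=
      (div_le_iff₀ (by positivity)).mp (le_max_left _ _)
    calc (∫ z in Annulus r' R', ‖z‖ ^ (2*k))
        ≤ R' ^ (2*k) * V' := hupper
      _ = V' * (c ^ (2*k) * c ^ (2*k) * c' ^ (-(2*k))) := by rw [hkey]; ring
      _ ≤ (C * (V1 ^ 2 * V2)) * (c ^ (2*k) * c ^ (2*k) * c' ^ (-(2*k))) := by
          refine mul_le_mul_of_nonneg_right hCV (by positivity)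
      _ = C * (c ^ (2*k) * V1) ^ 2 * (c' ^ (-(2*k)) * V2) := by ring
      _ ≤ C * (∫ z in Annulus r R, ‖z‖ ^ (2*k)) ^ 2 *
            ∫ z in Annulus r R, ‖z‖ ^ (-(2*k)) := by
          gcongr
  · -- `k < 0`
    have hn : (2:ℤ) * k ≤ 0 := by omega
    have hupper : (∫ z in Annulus r' R', ‖z‖ ^ (2*k)) ≤ r' ^ (2*k) * V' :=
      ub_aux r' R' _ _ fun z hz => zpow_anti_base hr'0 hz.1.le hn
    have hI : d ^ (2*k) * V3 ≤ ∫ z in Annulus r R, ‖z‖ ^ (2*k) :=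
      lb_aux r R r (min d R) _ hr0 le_rfl (min_le_right d R) _ fun z hz =>
        zpow_anti_base (hr0.trans hz.1) (hz.2.le.trans (min_le_left d R)) hn
    have hJ : d' ^ (-(2*k)) * V4 ≤ ∫ z in Annulus r R, ‖z‖ ^ (-(2*k)) :=
      lb_aux r R (max d' r) R _ hr0 (le_max_right d' r) le_rfl _ fun z hz =>
        zpow_mono_base hd'0 ((le_max_left d' r).trans hz.1.le) (by omega)
    have hkey : d ^ (2*k) * d ^ (2*k) * d' ^ (-(2*k)) = r' ^ (2*k) := by
      rw [← mul_zpow, hdd, mul_zpow, mul_assoc, zpow_neg,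
        mul_inv_cancel₀ (zpow_ne_zero _ hd'0.ne'), mul_one]
    have hCV : V' ≤ C * (V3 ^ 2 * V4) :=
      (div_le_iff₀ (by positivity)).mp (le_max_right _ _)
    calc (∫ z in Annulus r' R', ‖z‖ ^ (2*k))
        ≤ r' ^ (2*k) * V' := hupper
      _ = V' * (d ^ (2*k) * d ^ (2*k) * d' ^ (-(2*k))) := by rw [hkey]; ring
      _ ≤ (C * (V3 ^ 2 * V4)) * (d ^ (2*k) * d ^ (2*k) * d' ^ (-(2*k))) := by
          refine mul_le_mul_of_nonneg_right hCV (by positivity)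
      _ = C * (d ^ (2*k) * V3) ^ 2 * (d' ^ (-(2*k)) * V4) := by ring
      _ ≤ C * (∫ z in Annulus r R, ‖z‖ ^ (2*k)) ^ 2 *
            ∫ z in Annulus r R, ‖z‖ ^ (-(2*k)) := by
          gcongr
end
end

section
/- Let Ω ⊂ ℂⁿ be a bounded Reinhardt domain with C¹ boundary whose closure does not intersect any coordinate hyperplane. Then for every boundary point A = (a₁,…,aₙ) ∈ bΩ there exist radii 0 < r_k < R_k (k = 1,…,n) such that the product of annuli P = ∏_{k=1}^n A(r_k,R_k) satisfies P ⊂ Ω and A ∈ ∏_{k=1}^n A(r_k²/R_k, R_k²/r_k). -/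
open MeasureTheory Complex Filter Topology

noncomputable section

/-- `Ω` has `C¹` boundary: near each boundary point it is the sublevel set of a `C¹`
defining function with nonvanishing derivative on the boundary. -/
def HasC1Boundary {n : ℕ} (Ω : Set (Fin n → ℂ)) : Prop :=
  ∀ p ∈ frontier Ω, ∃ (U : Set (Fin n → ℂ)) (ρ : (Fin n → ℂ) → ℝ),
    IsOpen U ∧ p ∈ U ∧ ContDiffOn ℝ 1 ρ U ∧
    (∀ x ∈ U, x ∈ Ω ↔ ρ x < 0) ∧
    ∀ x ∈ U ∩ frontier Ω, fderivWithin ℝ ρ U x ≠ 0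

private lemma rot_eq (sz sw a b : ℝ) (zz ww : ℂ) (hsw : 0 < sw)
    (hz : zz = (sz : ℂ) * Complex.exp ((a : ℂ) * Complex.I))
    (hw : ww = (sw : ℂ) * Complex.exp ((b : ℂ) * Complex.I)) :
    Complex.exp (((a - b : ℝ) : ℂ) * Complex.I) * (((sz / sw : ℝ) : ℂ) * ww) = zz := by
  subst hz; subst hw
  have h0 : ((sw : ℝ) : ℂ) ≠ 0 := by exact_mod_cast hsw.ne'
  push_cast
  rw [sub_mul, Complex.exp_sub]
  field_simp [Complex.exp_ne_zero]

set_option maxHeartbeats 2000000 in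
/-- On a bounded Reinhardt domain `Ω` with `C¹` boundary whose closure
avoids the coordinate hyperplanes, every boundary point `A` admits a product of annuli
`P = ∏ A(r_k, R_k) ⊆ Ω` such that `A ∈ ∏ A(r_k²/R_k, R_k²/r_k)`. -/
theorem boundary_point_in_enlarged_prodAnnuli {n : ℕ} (Ω : Set (Fin n → ℂ))
    (hΩopen : IsOpen Ω) (hΩconn : IsConnected Ω)
    (hΩbdd : Bornology.IsBounded Ω)
    (hΩrein : IsReinhardt Ω)
    (hC1 : HasC1Boundary Ω)
    (haxes : ∀ z ∈ closure Ω, ∀ j : Fin n, z j ≠ 0)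
    (A : Fin n → ℂ) (hA : A ∈ frontier Ω) :
    ∃ r R : Fin n → ℝ, (∀ k, 0 < r k ∧ r k < R k) ∧
      ProdAnnuli r R ⊆ Ω ∧
      A ∈ ProdAnnuli (fun k => (r k) ^ 2 / R k) (fun k => (R k) ^ 2 / r k) := by
  classical
  rcases Nat.eq_zero_or_pos n with hn | hn
  · exfalso
    obtain ⟨x, hx⟩ := hΩconn.nonempty
    have huniv : Ω = Set.univ := Set.eq_univ_of_forall fun y => by
      subst hn
      rwa [Subsingleton.elim y x]
    rw [huniv, frontier_univ] at hA
    exact hA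
  haveI : Nonempty (Fin n) := Fin.pos_iff_nonempty.mp hn
  have hAcl : A ∈ closure Ω := frontier_subset_closure hA
  have hAnotΩ : A ∉ Ω := fun h =>
    (hΩopen.frontier_eq ▸ hA : A ∈ closure Ω \ Ω).2 h
  -- minimum modulus of A
  set m : ℝ := Finset.univ.inf' Finset.univ_nonempty (fun k => ‖A k‖) with hm_def
  have hmA : ∀ k, m ≤ ‖A k‖ := fun k =>
    Finset.inf'_le _ (Finset.mem_univ k)
  have hm : 0 < m := by
    rw [hm_def, Finset.lt_inf'_iff]
    intro k _
    exact norm_pos_iff.mpr (haxes A hAcl k)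
  -- C¹ boundary data
  obtain ⟨U, ρ, hUopen, hAU, hρ, hiff, hgrad⟩ := hC1 A hA
  have hdiff : ∀ x ∈ U, DifferentiableAt ℝ ρ x := fun x hx =>
    ((hρ.differentiableOn one_ne_zero).differentiableAt (hUopen.mem_nhds hx))
  set L := fderiv ℝ ρ A with hL_def
  have hL : L ≠ 0 := by
    have h := hgrad A ⟨hAU, hA⟩
    rwa [fderivWithin_of_isOpen hUopen hAU] at h
  set K := ‖L‖ with hK_def
  have hK : 0 < K := norm_pos_iff.mpr hL
  -- near-norming vector
  obtain ⟨u, hu1, hu2⟩ := L.exists_lt_apply_of_lt_opNorm (show (9/10)*K < ‖L‖ by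
    rw [← hK_def]; nlinarith)
  have hLu : L u ≠ 0 := by
    intro h
    rw [h] at hu2
    simp at hu2
    nlinarith
  set v : (Fin n) → ℂ := (-(L u)⁻¹) • u with hv_def
  have hLv : L v = -1 := by
    rw [hv_def, _root_.map_smul]
    field_simp
    rw [smul_eq_mul, neg_mul, one_div, inv_mul_cancel₀ hLu]
  have hv0 : 0 < ‖v‖ := by
    rw [norm_pos_iff]
    intro h
    rw [h, map_zero] at hLv
    norm_num at hLv
  have habsLu : (0:ℝ) < |L u| := abs_pos.mpr hLu
  have hu2' : 9/10 * K < |L u| := by rwa [Real.norm_eq_abs] at hu2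
  have hv_ub : ‖v‖ ≤ 10/(9*K) := by
    have hveq : ‖v‖ = ‖u‖ / |L u| := by
      rw [hv_def, norm_smul, norm_neg, norm_inv, Real.norm_eq_abs, inv_mul_eq_div]
    rw [hveq, div_le_div_iff₀ habsLu (by positivity)]
    nlinarith [norm_nonneg u]
  -- ρ A ≤ 0
  have hρA : ρ A ≤ 0 := by
    by_contra h
    push_neg at h
    have hcρ : ContinuousAt ρ A := hρ.continuousOn.continuousAt (hUopen.mem_nhds hAU)
    have hV : ρ ⁻¹' Set.Ioi 0 ∩ U ∈ 𝓝 A :=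
      Filter.inter_mem (hcρ.preimage_mem_nhds (Ioi_mem_nhds h)) (hUopen.mem_nhds hAU)
    obtain ⟨z, hz1, hz2⟩ := mem_closure_iff_nhds.mp hAcl _ hV
    have := (hiff z hz1.2).mp hz2
    have : (0:ℝ) < ρ z := hz1.1
    linarith [(hiff z hz1.2).mp hz2]
  -- continuity of the derivative
  have hcont : ContinuousOn (fderiv ℝ ρ) U := hρ.continuousOn_fderiv_of_isOpen hUopen le_rfl
  have hcontA : ContinuousAt (fderiv ℝ ρ) A := hcont.continuousAt (hUopen.mem_nhds hAU)
  obtain ⟨η₁, hη₁, hmod⟩ := Metric.continuousAt_iff.mp hcontA (K/10) (by positivity)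
  obtain ⟨η₂, hη₂, hballU⟩ := Metric.isOpen_iff.mp hUopen A hAU
  set η := min η₁ η₂ with hη_def
  have hη : 0 < η := lt_min hη₁ hη₂
  have hηU : Metric.ball A η ⊆ U := fun x hx =>
    hballU (Metric.ball_subset_ball (min_le_right _ _) hx)
  have hmod' : ∀ y ∈ Metric.ball A η, ‖fderiv ℝ ρ y - L‖ ≤ K/10 := by
    intro y hy
    have : dist y A < η₁ := lt_of_lt_of_le hy (min_le_left _ _)
    have := hmod this
    rw [dist_eq_norm] at this
    exact le_of_lt this
  -- the inward point
  set c : ℝ := (11/20)/K with hc_def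
  have hc : 0 < c := by positivity
  set t : ℝ := min (η/(2*(‖v‖ + c))) (m/(8*‖v‖)) with ht_def
  have ht : 0 < t := lt_min (by positivity) (by positivity)
  set w : Fin n → ℂ := A + t • v with hw_def
  set τ : ℝ := t * ‖v‖ with hτ_def
  have hτpos : 0 < τ := by positivity
  have hwA : ‖w - A‖ = τ := by
    rw [hw_def]
    simp [norm_smul, abs_of_pos ht, hτ_def]
  have hτm : τ ≤ m/8 := by
    have h1 : t ≤ m/(8*‖v‖) := min_le_right _ _
    rw [le_div_iff₀ (by positivity)] at h1
    rw [hτ_def, le_div_iff₀ (by norm_num : (0:ℝ) < 8)]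
    have h2 : t * (8*‖v‖) = t*‖v‖*8 := by ring
    linarith
  have htη : t * (‖v‖ + c) < η := by
    have h1 : t ≤ η/(2*(‖v‖ + c)) := min_le_left _ _
    rw [le_div_iff₀ (by positivity)] at h1
    have h2 : t * (2*(‖v‖+c)) = 2*(t*(‖v‖+c)) := by ring
    linarith
  clear_value m L K v c t w τ η
  have hKc : K * c = 11/20 := by
    rw [hc_def]; field_simp
  have hKv : K * ‖v‖ ≤ 10/9 := by
    have h := mul_le_mul_of_nonneg_left hv_ub hK.le
    have e : K * (10/(9*K)) = 10/9 := by field_simp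
    linarith [e ▸ h]
  -- the interior ball
  have hball : ∀ x : Fin n → ℂ, ‖x - w‖ ≤ c * t → x ∈ Ω := by
    intro x hx
    have hxA : ‖x - A‖ ≤ c*t + τ := by
      calc ‖x - A‖ = ‖(x - w) + (w - A)‖ := by ring_nf
        _ ≤ ‖x - w‖ + ‖w - A‖ := norm_add_le _ _
        _ ≤ c*t + τ := by rw [hwA]; linarith
    have hxball : x ∈ Metric.ball A η := by
      rw [Metric.mem_ball, dist_eq_norm]
      have e : c*t + τ < η := by
        have e2 : c*t + τ = t * (‖v‖ + c) := by rw [hτ_def]; ring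
        rw [e2]; exact htη
      linarith
    have hxU : x ∈ U := hηU hxball
    have hAball : A ∈ Metric.ball A η := Metric.mem_ball_self hη
    have key : ‖ρ x - ρ A - L (x - A)‖ ≤ (K/10) * ‖x - A‖ :=
      Convex.norm_image_sub_le_of_norm_fderiv_le'
        (fun y hy => hdiff y (hηU hy)) hmod' (convex_ball A η) hAball hxball
    rw [Real.norm_eq_abs] at key
    have hLxA : L (x - A) ≤ -t + (11/20)*t := by
      have h1 : x - A = (x - w) + t • v := by rw [hw_def]; abel
      rw [h1, map_add, _root_.map_smul, hLv, smul_eq_mul]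
      have h2 : L (x - w) ≤ K * ‖x - w‖ :=
        (le_abs_self _).trans (by rw [← Real.norm_eq_abs, hK_def]; exact L.le_opNorm _)
      have h3 : K * ‖x - w‖ ≤ K * (c * t) :=
        mul_le_mul_of_nonneg_left hx (le_of_lt hK)
      have h4 : K * (c * t) = (11/20)*t := by rw [← mul_assoc, hKc]
      linarith
    have hKτ : K * τ ≤ (10/9)*t := by
      have e : K * τ = t * (K * ‖v‖) := by rw [hτ_def]; ring
      have h2 := mul_le_mul_of_nonneg_left hKv ht.le
      rw [e]
      linarith
    have hρx : ρ x < 0 := by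
      have h5 : ρ x - ρ A - L (x - A) ≤ (K/10) * ‖x - A‖ := le_of_abs_le key
      have h6 : (K/10) * ‖x - A‖ ≤ (K/10) * (c*t + τ) :=
        mul_le_mul_of_nonneg_left hxA (by positivity)
      have h7 : (K/10) * (c*t + τ) ≤ (11/200)*t + (1/9)*t := by
        have e : (K/10)*(c*t+τ) = (K*(c*t))/10 + (K*τ)/10 := by ring
        have h4 : K * (c * t) = (11/20)*t := by rw [← mul_assoc, hKc]
        rw [e, h4]
        linarith
      linarith
    exact (hiff x hxU).mpr hρx
  -- w and its coordinate moduli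
  have hwΩ : w ∈ Ω := hball w (by rw [sub_self, norm_zero]; positivity)
  have hw0 : ∀ k, w k ≠ 0 := haxes w (subset_closure hwΩ)
  set s : Fin n → ℝ := fun k => ‖w k‖ with hs_def
  have hs_pos : ∀ k, 0 < s k := fun k => norm_pos_iff.mpr (hw0 k)
  have hs_close : ∀ k, |s k - ‖A k‖| ≤ τ := by
    intro k
    calc |s k - ‖A k‖| ≤ ‖w k - A k‖ :=
          abs_norm_sub_norm_le _ _
      _ = ‖(w - A) k‖ := rfl
      _ ≤ ‖w - A‖ := norm_le_pi_norm _ k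
      _ = τ := hwA
  have hsk_lb : ∀ k, 7*m/8 ≤ s k := by
    intro k
    have h := abs_le.mp (hs_close k)
    have := hmA k
    linarith [hτm, h.1, h.2]
  have hτsk : ∀ k, 7*τ ≤ s k := by
    intro k
    have := hsk_lb k
    linarith [hτm]
  have hKτ : K * τ ≤ (10/9)*t := by
    have e : K * τ = t * (K * ‖v‖) := by rw [hτ_def]; ring
    have h2 := mul_le_mul_of_nonneg_left hKv ht.le
    rw [e]; linarith
  have hρct : (9/20)*τ ≤ c*t := by
    have h1 : K*((9/20)*τ) ≤ K*(c*t) := by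
      have e1 : K*((9/20)*τ) = (9/20)*(K*τ) := by ring
      have e2 : K*(c*t) = (11/20)*t := by rw [← mul_assoc, hKc]
      rw [e1, e2]
      linarith
    exact le_of_mul_le_mul_left h1 hK
  refine ⟨fun k => s k - (9/20)*τ, fun k => s k + (9/20)*τ, ?_, ?_, ?_⟩
  · intro k
    refine ⟨?_, by linarith [hτpos]⟩
    have := hτsk k
    linarith
  · -- the product of annuli lies in Ω
    intro z hz
    have hz' : ∀ k, s k - (9/20)*τ < ‖z k‖ ∧ ‖z k‖ < s k + (9/20)*τ :=
      fun k => hz k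
    set ζ : Fin n → ℂ := fun k => ((‖z k‖ / s k : ℝ) : ℂ) * w k with hζ_def
    have hζw : ∀ k, ‖ζ k - w k‖ = |‖z k‖ - s k| := by
      intro k
      have hsk0 : s k ≠ 0 := (hs_pos k).ne'
      have e : ζ k - w k = (((‖z k‖ - s k) / s k : ℝ) : ℂ) * w k := by
        have h0 : ((s k : ℝ) : ℂ) ≠ 0 := Complex.ofReal_ne_zero.mpr hsk0
        rw [hζ_def]
        push_cast
        field_simp
      rw [e, norm_mul, Complex.norm_real, Real.norm_eq_abs, abs_div, abs_of_pos (hs_pos k)]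
      have : ‖w k‖ = s k := rfl
      rw [this, div_mul_cancel₀ _ hsk0]
    have hζball : ‖ζ - w‖ ≤ c * t := by
      rw [pi_norm_le_iff_of_nonneg (by positivity)]
      intro k
      have h1 : ‖(ζ - w) k‖ = ‖ζ k - w k‖ := rfl
      rw [h1, hζw k]
      have h2 := (hz' k).1
      have h3 := (hz' k).2
      have h4 : |‖z k‖ - s k| ≤ (9/20)*τ := by
        rw [abs_le]; constructor <;> linarith
      linarith [hρct]
    have hζΩ : ζ ∈ Ω := hball ζ hζball
    have hrot := hΩrein ζ hζΩ (fun k => (z k).arg - (w k).arg)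
    have hzeq : (fun k => Complex.exp (((((z k).arg - (w k).arg : ℝ)) : ℂ) * Complex.I) * ζ k) = z := by
      funext k
      have e1 : w k = ((s k : ℝ) : ℂ) * Complex.exp (((w k).arg : ℂ) * Complex.I) :=
        (Complex.norm_mul_exp_arg_mul_I (w k)).symm
      have e2 : z k = ((‖z k‖ : ℝ) : ℂ) * Complex.exp (((z k).arg : ℂ) * Complex.I) :=
        (Complex.norm_mul_exp_arg_mul_I (z k)).symm
      exact rot_eq (‖z k‖) (s k) (z k).arg (w k).arg (z k) (w k) (hs_pos k) e2 e1
    rwa [hzeq] at hrot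
  · -- A lies in the enlarged product of annuli
    intro k
    have h := abs_le.mp (hs_close k)
    have hsk := hτsk k
    have hskpos := hs_pos k
    constructor
    · show (s k - (9/20)*τ)^2 / (s k + (9/20)*τ) < ‖A k‖
      rw [div_lt_iff₀ (by linarith)]
      nlinarith [mul_le_mul_of_nonneg_right hsk hτpos.le, hτpos, sq_nonneg τ]
    · show ‖A k‖ < (s k + (9/20)*τ)^2 / (s k - (9/20)*τ)
      rw [lt_div_iff₀ (by linarith)]
      nlinarith [mul_le_mul_of_nonneg_right hsk hτpos.le, hτpos, sq_nonneg τ]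
end
end
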